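/- Fix a real g > 0, a positive integer t, and positive integers a₁, …, a_t; set ω_j = a_j·g for j = 1, …, t, T = 2π/g, and for a positive integer M let t_i = T(i−1)/M for i = 1, …, M. Let p and φ be positive integers, assume M > (φ+1)·p·max(a₁, …, a_t), and let (m₁, …, m_t) and (m′₁, …, m′_t) be integer vectors with ∑_j |m_j| ≤ p, ∑_j |m′_j| ≤ φ·p and |∑_j m_j·a_j| ≠ |∑_j m′_j·a_j|. Then (2/M)·∑_{i=1}^{M} cos((∑_j m_j ω_j) t_i)·cos((∑_j m′_j ω_j) t_i) = 0 and (2/M)·∑_{i=1}^{M} sin((∑_j m_j ω_j) t_i)·sin((∑_j m′_j ω_j) t_i) = 0. -/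

import Mathlib

open Real

lemma sum_cos_zero (M : ℕ) (hM : 0 < M) (k : ℤ) (hk : ¬ ((M : ℤ) ∣ k)) :
    ∑ i ∈ Finset.range M, Real.cos (2 * π * k * i / M) = 0 := by
  have hMR : (M : ℂ) ≠ 0 := by exact_mod_cast hM.ne'
  set ζ : ℂ := Complex.exp (2 * π * Complex.I * k / M) with hζ
  have hζM : ζ ^ M = 1 := by
    rw [hζ, ← Complex.exp_nat_mul]
    have : (M : ℂ) * (2 * π * Complex.I * k / M) = k * (2 * π * Complex.I) := by
      field_simp
    rw [this, Complex.exp_int_mul_two_pi_mul_I]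
  have hζ1 : ζ ≠ 1 := by
    intro h
    rw [hζ, Complex.exp_eq_one_iff] at h
    obtain ⟨n, hn⟩ := h
    apply hk
    refine ⟨n, ?_⟩
    have h2πI : (2 : ℂ) * π * Complex.I ≠ 0 := by
      simp [Real.pi_ne_zero, Complex.I_ne_zero]
    have hkc : (k : ℂ) = M * n := by
      field_simp at hn
      exact hn
    exact_mod_cast hkc
  have hgeom : ∑ i ∈ Finset.range M, ζ ^ i = 0 := by
    rw [geom_sum_eq hζ1, hζM]
    simp
  have hre : ∀ i ∈ Finset.range M,
      Real.cos (2 * π * k * i / M) = (ζ ^ i).re := by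
    intro i _
    rw [hζ, ← Complex.exp_nat_mul]
    have : (i : ℂ) * (2 * π * Complex.I * k / M)
        = ((2 * π * k * i / M : ℝ) : ℂ) * Complex.I := by
      push_cast; field_simp
    rw [this, Complex.exp_ofReal_mul_I_re]
  rw [Finset.sum_congr rfl hre, ← Complex.re_sum, hgeom, Complex.zero_re]

/-- Remark generalizing Theorem 2 to `t` base frequencies `ω_j = a_j g` with all
rational ratios: with sampling period `T = 2π/g`, nodes `t_i = T(i-1)/M`, and
`M > (φ+1) p max(a₁,…,a_t)`, aliasing between a retained harmonic
(`∑|m_j| ≤ p`) and a higher harmonic (`∑|m'_j| ≤ φ p`) of different absolute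
frequency vanishes exactly. -/
theorem RMHB_multifreq_aliasing_vanish (g : ℝ) (hg : 0 < g)
    (t : ℕ) (ht : 0 < t) (a : Fin t → ℕ) (ha : ∀ j, 0 < a j)
    (p φ M : ℕ) (hp : 0 < p) (hφ : 0 < φ)
    (hM : (φ + 1) * p * Finset.univ.sup a < M)
    (m m' : Fin t → ℤ)
    (hm : ∑ j, (m j).natAbs ≤ p) (hm' : ∑ j, (m' j).natAbs ≤ φ * p)
    (hne : |∑ j, m j * (a j : ℤ)| ≠ |∑ j, m' j * (a j : ℤ)|) :
    (2 / (M : ℝ)) * ∑ i ∈ Finset.Icc 1 M,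
        Real.cos ((∑ j, (m j : ℝ) * ((a j : ℝ) * g)) *
            ((2 * π / g) * ((i : ℝ) - 1) / M)) *
          Real.cos ((∑ j, (m' j : ℝ) * ((a j : ℝ) * g)) *
            ((2 * π / g) * ((i : ℝ) - 1) / M)) = 0 ∧
    (2 / (M : ℝ)) * ∑ i ∈ Finset.Icc 1 M,
        Real.sin ((∑ j, (m j : ℝ) * ((a j : ℝ) * g)) *
            ((2 * π / g) * ((i : ℝ) - 1) / M)) *
          Real.sin ((∑ j, (m' j : ℝ) * ((a j : ℝ) * g)) *
            ((2 * π / g) * ((i : ℝ) - 1) / M)) = 0 := by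
  have hM0 : 0 < M := lt_of_le_of_lt (Nat.zero_le _) hM
  set S : ℕ := Finset.univ.sup a with hS
  set n : ℤ := ∑ j, m j * (a j : ℤ) with hn
  set n' : ℤ := ∑ j, m' j * (a j : ℤ) with hn'
  -- bounds on the integer frequencies
  have hb : ∀ (v : Fin t → ℤ) (q : ℕ), (∑ j, (v j).natAbs) ≤ q →
      |∑ j, v j * (a j : ℤ)| ≤ (q : ℤ) * S := by
    intro v q hv
    calc |∑ j, v j * (a j : ℤ)| ≤ ∑ j, |v j * (a j : ℤ)| :=
          Finset.abs_sum_le_sum_abs _ _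
      _ = ∑ j, ((v j).natAbs : ℤ) * (a j : ℤ) := by
          apply Finset.sum_congr rfl; intro j _
          rw [abs_mul, Int.abs_eq_natAbs, abs_of_nonneg (by positivity)]
      _ ≤ ∑ j, ((v j).natAbs : ℤ) * (S : ℤ) := by
          apply Finset.sum_le_sum; intro j _
          have : a j ≤ S := Finset.le_sup (Finset.mem_univ j)
          exact mul_le_mul_of_nonneg_left (by exact_mod_cast this) (by positivity)
      _ = ((∑ j, (v j).natAbs : ℕ) : ℤ) * S := by push_cast [Finset.sum_mul]; ring
      _ ≤ (q : ℤ) * S := by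
          have : ((∑ j, (v j).natAbs : ℕ) : ℤ) ≤ (q : ℤ) := by exact_mod_cast hv
          exact mul_le_mul_of_nonneg_right this (by positivity)
  have hbn : |n| ≤ (p : ℤ) * S := hb m p hm
  have hbn' : |n'| ≤ ((φ * p : ℕ) : ℤ) * S := hb m' (φ * p) hm'
  have hnd : ∀ k : ℤ, k ≠ 0 → |k| ≤ |n| + |n'| → ¬ ((M : ℤ) ∣ k) := by
    intro k hk0 hkle hdvd
    have h1 : (M : ℤ) ≤ |k| := Int.le_of_dvd (abs_pos.mpr hk0) ((dvd_abs _ _).mpr hdvd)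
    have h2 : |n| + |n'| ≤ (((φ + 1) * p * S : ℕ) : ℤ) := by
      push_cast at hbn hbn' ⊢
      nlinarith
    have h3 : (((φ + 1) * p * S : ℕ) : ℤ) < (M : ℤ) := by exact_mod_cast hM
    omega
  have hdiff : ¬ ((M : ℤ) ∣ (n - n')) := by
    apply hnd
    · intro h
      exact hne (by rw [sub_eq_zero.mp h])
    · calc |n - n'| = |n + (-n')| := by rw [sub_eq_add_neg]
        _ ≤ |n| + |(-n')| := abs_add_le _ _
        _ = |n| + |n'| := by rw [abs_neg]
  have hsum' : ¬ ((M : ℤ) ∣ (n + n')) := by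
    apply hnd
    · intro h
      have : n = -n' := by linarith [h]
      exact hne (by rw [this, abs_neg])
    · exact abs_add_le _ _
  -- rewrite the argument of the trig functions
  have harg : ∀ (v : Fin t → ℤ) (x : ℝ),
      (∑ j, (v j : ℝ) * ((a j : ℝ) * g)) * ((2 * π / g) * x / M)
        = 2 * π * ((∑ j, v j * (a j : ℤ) : ℤ) : ℝ) * x / M := by
    intro v x
    have h1 : (∑ j, (v j : ℝ) * ((a j : ℝ) * g))
        = ((∑ j, v j * (a j : ℤ) : ℤ) : ℝ) * g := by
      push_cast
      rw [Finset.sum_mul]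
      apply Finset.sum_congr rfl; intro j _; ring
    rw [h1]
    field_simp
  constructor
  · have hco : ∑ i ∈ Finset.Icc 1 M,
        Real.cos ((∑ j, (m j : ℝ) * ((a j : ℝ) * g)) * ((2 * π / g) * ((i : ℝ) - 1) / M)) *
          Real.cos ((∑ j, (m' j : ℝ) * ((a j : ℝ) * g)) * ((2 * π / g) * ((i : ℝ) - 1) / M))
        = ∑ i ∈ Finset.range M,
            Real.cos (2 * π * (n : ℝ) * i / M) * Real.cos (2 * π * (n' : ℝ) * i / M) := by
      rw [show Finset.Icc 1 M = Finset.Ico 1 (M + 1) from (Finset.Ico_add_one_right_eq_Icc (a := 1) (b := M)).symm, Finset.sum_Ico_eq_sum_range]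
      simp only [Nat.add_sub_cancel]
      apply Finset.sum_congr rfl
      intro i _
      have e1 : ((1 + i : ℕ) : ℝ) - 1 = i := by push_cast; ring
      rw [e1, harg m, harg m']
    have hsplit : ∀ i : ℕ,
        Real.cos (2 * π * (n : ℝ) * i / M) * Real.cos (2 * π * (n' : ℝ) * i / M)
          = (Real.cos (2 * π * ((n - n' : ℤ) : ℝ) * i / M)
            + Real.cos (2 * π * ((n + n' : ℤ) : ℝ) * i / M)) / 2 := by
      intro i
      have h1 : 2 * π * ((n - n' : ℤ) : ℝ) * i / M
          = 2 * π * (n : ℝ) * i / M - 2 * π * (n' : ℝ) * i / M := by push_cast; ring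
      have h2 : 2 * π * ((n + n' : ℤ) : ℝ) * i / M
          = 2 * π * (n : ℝ) * i / M + 2 * π * (n' : ℝ) * i / M := by push_cast; ring
      rw [h1, h2, Real.cos_sub, Real.cos_add]
      ring
    rw [hco]
    simp_rw [hsplit]
    rw [← Finset.sum_div, Finset.sum_add_distrib,
      sum_cos_zero M hM0 (n - n') hdiff, sum_cos_zero M hM0 (n + n') hsum']
    norm_num
  · have hco : ∑ i ∈ Finset.Icc 1 M,
        Real.sin ((∑ j, (m j : ℝ) * ((a j : ℝ) * g)) * ((2 * π / g) * ((i : ℝ) - 1) / M)) *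
          Real.sin ((∑ j, (m' j : ℝ) * ((a j : ℝ) * g)) * ((2 * π / g) * ((i : ℝ) - 1) / M))
        = ∑ i ∈ Finset.range M,
            Real.sin (2 * π * (n : ℝ) * i / M) * Real.sin (2 * π * (n' : ℝ) * i / M) := by
      rw [show Finset.Icc 1 M = Finset.Ico 1 (M + 1) from (Finset.Ico_add_one_right_eq_Icc (a := 1) (b := M)).symm, Finset.sum_Ico_eq_sum_range]
      simp only [Nat.add_sub_cancel]
      apply Finset.sum_congr rfl
      intro i _
      have e1 : ((1 + i : ℕ) : ℝ) - 1 = i := by push_cast; ring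
      rw [e1, harg m, harg m']
    have hsplit : ∀ i : ℕ,
        Real.sin (2 * π * (n : ℝ) * i / M) * Real.sin (2 * π * (n' : ℝ) * i / M)
          = (Real.cos (2 * π * ((n - n' : ℤ) : ℝ) * i / M)
            - Real.cos (2 * π * ((n + n' : ℤ) : ℝ) * i / M)) / 2 := by
      intro i
      have h1 : 2 * π * ((n - n' : ℤ) : ℝ) * i / M
          = 2 * π * (n : ℝ) * i / M - 2 * π * (n' : ℝ) * i / M := by push_cast; ring
      have h2 : 2 * π * ((n + n' : ℤ) : ℝ) * i / M
          = 2 * π * (n : ℝ) * i / M + 2 * π * (n' : ℝ) * i / M := by push_cast; ring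
      rw [h1, h2, Real.cos_sub, Real.cos_add]
      ring
    rw [hco]
    simp_rw [hsplit]
    rw [← Finset.sum_div, Finset.sum_sub_distrib,
      sum_cos_zero M hM0 (n - n') hdiff, sum_cos_zero M hM0 (n + n') hsum']
    norm_num
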